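/- A set X of infinite subsets of ℕ is unbounded (with respect to eventual domination, viewing each infinite set as its increasing enumeration) if and only if for each increasing function a : ℕ → ℕ, there is a set x in X that omits infinitely many intervals [a(n), a(n+1)), i.e., x ∩ [a(n), a(n+1)) = ∅ for infinitely many n. -/

import Mathlib

open Set

/-- Increasing enumeration of a subset of ℕ. -/
noncomputable def enum (x : Set ℕ) : ℕ → ℕ := Nat.nth (· ∈ x)

lemma enum_range {f : ℕ → ℕ} (hf : StrictMono f) : enum (Set.range f) = f := by
  have hinf : {n | n ∈ Set.range f}.Infinite := by
    exact Set.infinite_range_of_injective hf.injective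
  have h1 : StrictMono (enum (Set.range f)) := Nat.nth_strictMono hinf
  refine (h1.range_inj hf).mp ?_
  have := Nat.range_nth_of_infinite (p := (· ∈ Set.range f)) hinf
  exact this

/-- auxiliary fast-growing index function -/
def iterf (g : ℕ → ℕ) : ℕ → ℕ
  | 0 => 0
  | n + 1 => g (iterf g n) + 1

theorem stmt0 (X : Set (Set ℕ)) (hX : ∀ x ∈ X, x.Infinite) :
    (∀ a : Set ℕ, a.Infinite → ∃ x ∈ X, {n | enum a n < enum x n}.Infinite) ↔
    (∀ a : ℕ → ℕ, StrictMono a → ∃ x ∈ X,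
      {n | x ∩ Set.Ico (a n) (a (n + 1)) = ∅}.Infinite) := by
  classical
  constructor
  · -- forward
    intro h a ha
    have hf : StrictMono (fun n => a (2 * n)) :=
      ha.comp (fun m n hmn => by omega)
    obtain ⟨x, hxX, hx⟩ := h (Set.range (fun n => a (2 * n)))
      (Set.infinite_range_of_injective hf.injective)
    rw [enum_range hf] at hx
    refine ⟨x, hxX, ?_⟩
    by_contra hfin
    rw [Set.not_infinite] at hfin
    obtain ⟨N, hN⟩ := hfin.bddAbove
    -- for all n, x meets [a (N+1+n), a (N+1+n+1))
    have hmeet : ∀ n, ∃ y ∈ x, a (N + 1 + n) ≤ y ∧ y < a (N + 1 + n + 1) := by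
      intro n
      by_contra hco
      push_neg at hco
      have hmem : (N + 1 + n) ∈ {n | x ∩ Set.Ico (a n) (a (n + 1)) = ∅} := by
        refine Set.eq_empty_iff_forall_notMem.mpr fun y hy => ?_
        rcases hy with ⟨hy1, hy2, hy3⟩
        exact absurd hy3 (not_lt.mpr (hco y hy1 hy2))
      have := hN hmem
      omega
    -- count x (a (N+1+m+1)) ≥ m+1
    have hcount : ∀ m, m + 1 ≤ Nat.count (· ∈ x) (a (N + 1 + m + 1)) := by
      intro m
      induction m with
      | zero =>
        obtain ⟨y, hy, _, hy2⟩ := hmeet 0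
        have h1 : Nat.count (· ∈ x) (y + 1) = Nat.count (· ∈ x) y + 1 := by
          rw [Nat.count_succ]; simp [hy]
        have hmono : Nat.count (· ∈ x) (y + 1) ≤ Nat.count (· ∈ x) (a (N + 1 + 0 + 1)) :=
          Nat.count_monotone _ (by omega)
        omega
      | succ m ih =>
        obtain ⟨y, hy, hy1, hy2⟩ := hmeet (m + 1)
        have h1 : Nat.count (· ∈ x) (y + 1) = Nat.count (· ∈ x) y + 1 := by
          rw [Nat.count_succ]; simp [hy]
        have h2 : Nat.count (· ∈ x) (a (N + 1 + m + 1)) ≤ Nat.count (· ∈ x) y :=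
          Nat.count_monotone _ (by
            have he : N + 1 + (m + 1) = N + 1 + m + 1 := by omega
            rw [he] at hy1; omega)
        have h3 : Nat.count (· ∈ x) (y + 1) ≤ Nat.count (· ∈ x) (a (N + 1 + (m + 1) + 1)) :=
          Nat.count_monotone _ (by omega)
        omega
    -- so enum x m < a (N + 1 + m + 1)
    have henum : ∀ m, enum x m < a (N + 1 + m + 1) := fun m =>
      Nat.nth_lt_of_lt_count (lt_of_lt_of_le (Nat.lt_succ_self m) (hcount m))
    -- contradiction with hx
    have hsub : {n | (fun n => a (2 * n)) n < enum x n} ⊆ Set.Iio (N + 2) := by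
      intro n hn
      simp only [Set.mem_setOf_eq] at hn
      by_contra hge
      simp only [Set.mem_Iio, not_lt] at hge
      have h1 : enum x n < a (N + 1 + n + 1) := henum n
      have h2 : a (N + 1 + n + 1) ≤ a (2 * n) := ha.monotone (by omega)
      omega
    exact hx ((Set.finite_Iio _).subset hsub)
  · -- backward
    intro h a ha
    have hainf : {n | n ∈ a}.Infinite := ha
    have hea : StrictMono (enum a) := Nat.nth_strictMono hainf
    set f : ℕ → ℕ := iterf (enum a) with hfdef
    have hfsucc : ∀ n, f (n + 1) = enum a (f n) + 1 := fun n => rfl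
    have hle : ∀ m, m ≤ enum a m := fun m =>
      Nat.le_nth (fun hfin => absurd hfin hainf)
    have hfmono : StrictMono f := strictMono_nat_of_lt_succ (fun n => by
      have := hle (f n)
      rw [hfsucc]
      omega)
    have hA : StrictMono (fun n => enum a (f n)) := hea.comp hfmono
    obtain ⟨x, hxX, hS⟩ := h _ hA
    refine ⟨x, hxX, ?_⟩
    have hxinf : {n | n ∈ x}.Infinite := hX x hxX
    apply Set.infinite_of_forall_exists_gt
    intro M
    obtain ⟨n, hnS, hn⟩ := hS.exists_gt (enum x M)
    simp only [Set.mem_setOf_eq] at hnS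
    set k := Nat.count (· ∈ x) (enum a (f n)) with hkdef
    have hAn : enum x M < enum a (f n) := lt_of_lt_of_le hn (hA.le_apply)
    have hMk : M < k := (Nat.lt_nth_iff_count_lt hxinf).mpr hAn
    have hge : enum a (f (n + 1)) ≤ enum x k := by
      refine (Nat.count_le_iff_le_nth hxinf).mp ?_
      by_contra hlt
      push_neg at hlt
      have h1 : enum x k < enum a (f (n + 1)) := (Nat.lt_nth_iff_count_lt hxinf).mp hlt
      have h2 : enum a (f n) ≤ enum x k := by
        by_contra h2
        push_neg at h2
        have := (Nat.lt_nth_iff_count_lt hxinf).mpr h2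
        omega
      have h3 : enum x k ∈ x := Nat.nth_mem_of_infinite hxinf k
      have : enum x k ∈ x ∩ Set.Ico (enum a (f n)) (enum a (f (n + 1))) :=
        ⟨h3, h2, h1⟩
      rw [hnS] at this
      exact this
    have hk1 : k < f (n + 1) := by
      have := Nat.count_le (p := (· ∈ x)) (n := enum a (f n))
      rw [hfsucc]
      omega
    exact ⟨k, lt_of_lt_of_le (hea hk1) hge, hMk⟩
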